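/- Applying one Hudson step to the homaloidal type (3m; 3m-6, 6^{m-3}, 4³, 3², 2, 1) for m ≥ 5 (with multiplicities sorted decreasingly: 3m-6 ≥ 6 ≥ ... when m ≥ 4, so ε = (3m-6) + 6 + 6 - 3m = 6) yields a type whose sorted multiplicity sequence is that of (3(m-2); 3(m-2)-6, 6^{m-5}, 4³, 3², 2, 1); consequently, by induction from the base cases m = 3, 4, the type (3m; 3m-6, 6^{m-3}, 4³, 3², 2, 1) passes Hudson's test for every m ≥ 3. -/

import Mathlib

/-- One step of Hudson's test: sort the multiplicities decreasingly,
set `ε = m₁ + m₂ + m₃ - d` and replace `(d; m₁, ..., m_r)` by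
`(d - ε; m₁ - ε, m₂ - ε, m₃ - ε, m₄, ..., m_r)`. -/
def hudsonStep (p : ℤ × Multiset ℤ) : ℤ × Multiset ℤ :=
  match Multiset.sort p.2 (· ≥ ·) with
  | a :: b :: c :: rest =>
      let ε := a + b + c - p.1
      (p.1 - ε, ((a - ε) :: (b - ε) :: (c - ε) :: rest : List ℤ))
  | l => (p.1, (l : List ℤ))

/-- A type passes Hudson's test if iterating the step keeps all multiplicities
nonnegative and eventually reaches `(1; 0, ..., 0)`. -/
def passesHudson (p : ℤ × Multiset ℤ) : Prop :=
  ∃ n : ℕ, (∀ j ≤ n, ∀ x ∈ (hudsonStep^[j] p).2, (0 : ℤ) ≤ x) ∧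
    (hudsonStep^[n] p).1 = 1 ∧ ∀ x ∈ (hudsonStep^[n] p).2, x = 0

/-- The multiplicities of the homaloidal type `(3m; 3m-6, 6^{m-3}, 4³, 3², 2, 1)`. -/
def exType (m : ℕ) : Multiset ℤ :=
  (3 * (m : ℤ) - 6) ::ₘ (Multiset.replicate (m - 3) (6 : ℤ) + {4, 4, 4, 3, 3, 2, 1})

lemma sort_coe (l : List ℤ) (h : l.Pairwise (· ≥ ·)) : Multiset.sort (↑l) (· ≥ ·) = l :=
  List.Perm.eq_of_pairwise' (Multiset.pairwise_sort _ _) h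
    (Multiset.coe_eq_coe.mp (Multiset.sort_eq _ _))

lemma hudsonStep_of_sort (p : ℤ × Multiset ℤ) (a b c : ℤ) (rest : List ℤ)
    (h : Multiset.sort p.2 (· ≥ ·) = a :: b :: c :: rest) :
    hudsonStep p = (p.1 - (a + b + c - p.1),
      (((a - (a + b + c - p.1)) :: (b - (a + b + c - p.1)) :: (c - (a + b + c - p.1)) :: rest : List ℤ) : Multiset ℤ)) := by
  simp only [hudsonStep, h]

lemma step_list (d a b c : ℤ) (rest : List ℤ) (S : Multiset ℤ)
    (hS : S = ↑(a :: b :: c :: rest)) (hs : (a :: b :: c :: rest).Pairwise (· ≥ ·)) :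
    hudsonStep (d, S) = (d - (a + b + c - d),
      (((a - (a + b + c - d)) :: (b - (a + b + c - d)) :: (c - (a + b + c - d)) :: rest : List ℤ) : Multiset ℤ)) := by
  apply hudsonStep_of_sort
  rw [show (d, S).2 = (↑(a :: b :: c :: rest) : Multiset ℤ) from hS, sort_coe _ hs]

lemma aux_sorted (k : ℕ) : (List.replicate k (6:ℤ) ++ [4,4,4,3,3,2,1]).Pairwise (· ≥ ·) := by
  induction k with
  | zero => decide
  | succ n ih =>
    rw [List.replicate_succ, List.cons_append, List.pairwise_cons]
    refine ⟨?_, ih⟩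
    intro b hb
    rw [List.mem_append] at hb
    rcases hb with hb | hb
    · have := List.eq_of_mem_replicate hb; omega
    · simp only [List.mem_cons, List.not_mem_nil, or_false] at hb
      rcases hb with h|h|h|h|h|h|h <;> omega

lemma exType_sorted (m : ℕ) (hm : 5 ≤ m) :
    ((3*(m:ℤ)-6) :: 6 :: 6 :: (List.replicate (m-5) (6:ℤ) ++ [4,4,4,3,3,2,1])).Pairwise (· ≥ ·) := by
  have h1 := aux_sorted (m - 5)
  have h2 := aux_sorted (m - 4)
  have h3 := aux_sorted (m - 3)
  have e2 : m - 4 = (m - 5) + 1 := by omega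
  have e3 : m - 3 = (m - 4) + 1 := by omega
  rw [e2, List.replicate_succ, List.cons_append] at h2
  rw [e3, e2, List.replicate_succ, List.replicate_succ, List.cons_append, List.cons_append] at h3
  rw [List.pairwise_cons]
  refine ⟨?_, h3⟩
  intro b hb
  simp only [List.mem_cons, List.mem_append] at hb
  have hm' : (6:ℤ) ≤ 3*(m:ℤ)-6 := by
    have : (5:ℤ) ≤ (m:ℤ) := by exact_mod_cast hm
    linarith
  rcases hb with h|h|h|h
  · omega
  · omega
  · have := List.eq_of_mem_replicate h; omega
  · simp only [List.mem_cons, List.not_mem_nil, or_false] at h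
    rcases h with h|h|h|h|h|h|h <;> omega

lemma exType_coe (m : ℕ) (hm : 5 ≤ m) :
    exType m = ↑((3*(m:ℤ)-6) :: 6 :: 6 :: (List.replicate (m-5) (6:ℤ) ++ [4,4,4,3,3,2,1])) := by
  rw [exType, show m - 3 = (m-5) + 1 + 1 by omega]
  rw [Multiset.replicate_succ, Multiset.replicate_succ]
  rw [← Multiset.coe_replicate]
  rw [show ({4,4,4,3,3,2,1} : Multiset ℤ) = ↑([4,4,4,3,3,2,1] : List ℤ) from rfl]
  rw [Multiset.cons_add, Multiset.cons_add, Multiset.coe_add]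
  simp [Multiset.cons_coe]

lemma part1 (m : ℕ) (hm : 5 ≤ m) :
    hudsonStep (3 * (m : ℤ), exType m) =
      (3 * ((m : ℤ) - 2), exType (m - 2) + Multiset.replicate 2 0) := by
  rw [step_list (3*(m:ℤ)) (3*(m:ℤ)-6) 6 6 (List.replicate (m-5) (6:ℤ) ++ [4,4,4,3,3,2,1])
    _ (exType_coe m hm) (exType_sorted m hm)]
  have h2 : exType (m-2) = (3*(m:ℤ)-12) ::ₘ (Multiset.replicate (m-5) (6:ℤ) + {4,4,4,3,3,2,1}) := by
    rw [exType, show (m-2) - 3 = m - 5 from by omega]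
    congr 1
    have : ((m-2 : ℕ) : ℤ) = (m:ℤ) - 2 := by
      push_cast [Nat.cast_sub (show 2 ≤ m by omega)]; ring
    rw [this]; ring
  refine Prod.ext ?_ ?_
  · simp only; ring
  · simp only [h2]
    norm_num
    rw [show (3 * (m:ℤ) - 6 - 6) = 3 * (m:ℤ) - 12 from by ring]
    simp only [← Multiset.cons_coe, ← Multiset.coe_add, Multiset.coe_replicate]
    simp only [← Multiset.singleton_add,
      show ({4,4,4,3,3,2,1} : Multiset ℤ) = {4}+{4}+{4}+{3}+{3}+{2}+{1} from by rfl]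
    abel

lemma sort_add_zeros (S : Multiset ℤ) (k : ℕ) (hS : ∀ x ∈ S, (0:ℤ) ≤ x) :
    Multiset.sort (S + Multiset.replicate k 0) (· ≥ ·) =
      Multiset.sort S (· ≥ ·) ++ List.replicate k (0:ℤ) := by
  have hcoe : (↑(Multiset.sort S (· ≥ ·) ++ List.replicate k (0:ℤ)) : Multiset ℤ)
      = S + Multiset.replicate k 0 := by
    rw [← Multiset.coe_add, Multiset.coe_replicate, Multiset.sort_eq]
  rw [← hcoe, sort_coe]
  rw [List.pairwise_append]
  refine ⟨Multiset.pairwise_sort _ _, List.pairwise_replicate.2 (by simp), ?_⟩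
  intro x hx y hy
  have hx' : x ∈ S := by rw [← Multiset.mem_sort (r := (· ≥ ·))]; exact hx
  have h1 := hS x hx'
  have h2 : y = 0 := List.eq_of_mem_replicate hy
  simp [h2]; omega

lemma hudsonStep_add_zeros (d : ℤ) (S : Multiset ℤ) (k : ℕ)
    (hcard : 3 ≤ Multiset.card S) (hS : ∀ x ∈ S, (0:ℤ) ≤ x) :
    hudsonStep (d, S + Multiset.replicate k 0) =
      ((hudsonStep (d, S)).1, (hudsonStep (d, S)).2 + Multiset.replicate k 0) := by
  have hlen : 3 ≤ (Multiset.sort S (· ≥ ·)).length := by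
    rw [Multiset.length_sort]; exact hcard
  rcases h : Multiset.sort S (· ≥ ·) with _ | ⟨a, _ | ⟨b, _ | ⟨c, rest⟩⟩⟩ <;>
    simp [h] at hlen <;> try omega
  rw [hudsonStep_of_sort (d, S) a b c rest h]
  rw [hudsonStep_of_sort (d, S + Multiset.replicate k 0) a b c (rest ++ List.replicate k 0)
    (by rw [show (d, S + Multiset.replicate k 0).2 = S + Multiset.replicate k 0 from rfl,
          sort_add_zeros S k hS, h]; simp)]
  simp only [Prod.mk.injEq, true_and]
  rw [← Multiset.coe_replicate]
  exact (Multiset.coe_add ((a-(a+b+c-d)) :: (b-(a+b+c-d)) :: (c-(a+b+c-d)) :: rest) (List.replicate k 0)).symm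

lemma card_hudsonStep (p : ℤ × Multiset ℤ) :
    Multiset.card (hudsonStep p).2 = Multiset.card p.2 := by
  have hl : Multiset.card p.2 = (Multiset.sort p.2 (· ≥ ·)).length := by
    rw [Multiset.length_sort]
  rw [hudsonStep]
  rcases h : Multiset.sort p.2 (· ≥ ·) with _ | ⟨a, _ | ⟨b, _ | ⟨c, rest⟩⟩⟩ <;> simp_all [hl]

lemma iterate_hudsonStep_add_zeros (d : ℤ) (S : Multiset ℤ) (k : ℕ) (n : ℕ)
    (hcard : 3 ≤ Multiset.card S)
    (hnn : ∀ j ≤ n, ∀ x ∈ (hudsonStep^[j] (d, S)).2, (0:ℤ) ≤ x) :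
    ∀ j ≤ n, hudsonStep^[j] (d, S + Multiset.replicate k 0) =
      ((hudsonStep^[j] (d, S)).1, (hudsonStep^[j] (d, S)).2 + Multiset.replicate k 0) := by
  intro j hj
  induction j with
  | zero => simp
  | succ i ih =>
    have hi : i ≤ n := Nat.le_of_succ_le hj
    rw [Function.iterate_succ_apply', Function.iterate_succ_apply', ih hi]
    have hc : 3 ≤ Multiset.card (hudsonStep^[i] (d, S)).2 := by
      clear ih hnn hj hi
      induction i with
      | zero => simpa
      | succ i' ih' => rw [Function.iterate_succ_apply', card_hudsonStep]; exact ih'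
    have := hudsonStep_add_zeros (hudsonStep^[i] (d, S)).1 (hudsonStep^[i] (d, S)).2 k hc
      (hnn i hi)
    simpa using this

lemma passes_add_zeros (d : ℤ) (S : Multiset ℤ) (k : ℕ)
    (hcard : 3 ≤ Multiset.card S) (h : passesHudson (d, S)) :
    passesHudson (d, S + Multiset.replicate k 0) := by
  obtain ⟨n, h1, h2, h3⟩ := h
  have key := iterate_hudsonStep_add_zeros d S k n hcard h1
  refine ⟨n, ?_, ?_, ?_⟩
  · intro j hj x hx
    rw [key j hj] at hx
    simp only [Multiset.mem_add] at hx
    rcases hx with hx | hx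
    · exact h1 j hj x hx
    · simp [Multiset.eq_of_mem_replicate hx]
  · rw [key n le_rfl]; exact h2
  · intro x hx
    rw [key n le_rfl] at hx
    simp only [Multiset.mem_add] at hx
    rcases hx with hx | hx
    · exact h3 x hx
    · exact Multiset.eq_of_mem_replicate hx

lemma passes_of_step (p : ℤ × Multiset ℤ) (h0 : ∀ x ∈ p.2, (0:ℤ) ≤ x)
    (h : passesHudson (hudsonStep p)) : passesHudson p := by
  obtain ⟨n, h1, h2, h3⟩ := h
  refine ⟨n + 1, ?_, ?_, ?_⟩
  · intro j hj x hx
    match j with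
    | 0 => exact h0 x hx
    | i + 1 =>
      rw [Function.iterate_succ_apply] at hx
      exact h1 i (by omega) x hx
  · rw [Function.iterate_succ_apply]; exact h2
  · intro x hx
    rw [Function.iterate_succ_apply] at hx
    exact h3 x hx

lemma base3 : passesHudson (3 * ((3:ℕ) : ℤ), exType 3) := by
  have e0 : exType 3 = (↑([4,4,4,3,3,3,2,1] : List ℤ) : Multiset ℤ) := by decide
  have e1 : hudsonStep^[1] (3 * ((3:ℕ) : ℤ), exType 3) = (6, (↑([3,3,3,2,1,1,1,1] : List ℤ) : Multiset ℤ)) := by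
    rw [Function.iterate_one, show (3 * ((3:ℕ):ℤ)) = (9:ℤ) from by norm_num] at *
    rw [step_list 9 4 4 4 [3,3,3,2,1] _ e0 (by decide)]
    decide
  have e2 : hudsonStep^[2] (3 * ((3:ℕ) : ℤ), exType 3) = (3, (↑([2,1,1,1,1,0,0,0] : List ℤ) : Multiset ℤ)) := by
    rw [show (2:ℕ) = 1+1 from rfl, Function.iterate_succ_apply', e1,
      step_list 6 3 3 3 [2,1,1,1,1] _ rfl (by decide)]
    decide
  have e3 : hudsonStep^[3] (3 * ((3:ℕ) : ℤ), exType 3) = (2, (↑([1,1,1,0,0,0,0,0] : List ℤ) : Multiset ℤ)) := by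
    rw [show (3:ℕ) = 2+1 from rfl, Function.iterate_succ_apply', e2,
      step_list 3 2 1 1 [1,1,0,0,0] _ rfl (by decide)]
    decide
  have e4 : hudsonStep^[4] (3 * ((3:ℕ) : ℤ), exType 3) = (1, (↑([0,0,0,0,0,0,0,0] : List ℤ) : Multiset ℤ)) := by
    rw [show (4:ℕ) = 3+1 from rfl, Function.iterate_succ_apply', e3,
      step_list 2 1 1 1 [0,0,0,0,0] _ rfl (by decide)]
    decide
  refine ⟨4, ?_, by rw [e4], by rw [e4]; decide⟩
  intro j hj x hx
  interval_cases j
  · rw [Function.iterate_zero_apply] at hx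
    rw [show (3 * ((3:ℕ):ℤ), exType 3).2 = exType 3 from rfl, e0] at hx
    revert hx; revert x; decide
  · rw [e1] at hx; revert hx; revert x; decide
  · rw [e2] at hx; revert hx; revert x; decide
  · rw [e3] at hx; revert hx; revert x; decide
  · rw [e4] at hx; revert hx; revert x; decide

lemma base4 : passesHudson (3 * ((4:ℕ) : ℤ), exType 4) := by
  have e0 : exType 4 = (↑([6,6,4,4,4,3,3,2,1] : List ℤ) : Multiset ℤ) := by decide
  have e1 : hudsonStep^[1] (3 * ((4:ℕ) : ℤ), exType 4) = (8, (↑([4,4,3,3,2,2,2,1,0] : List ℤ) : Multiset ℤ)) := by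
    rw [Function.iterate_one, show (3 * ((4:ℕ):ℤ)) = (12:ℤ) from by norm_num] at *
    rw [step_list 12 6 6 4 [4,4,3,3,2,1] _ e0 (by decide)]
    decide
  have e2 : hudsonStep^[2] (3 * ((4:ℕ) : ℤ), exType 4) = (5, (↑([3,2,2,2,1,1,1,0,0] : List ℤ) : Multiset ℤ)) := by
    rw [show (2:ℕ) = 1+1 from rfl, Function.iterate_succ_apply', e1,
      step_list 8 4 4 3 [3,2,2,2,1,0] _ rfl (by decide)]
    decide
  have e3 : hudsonStep^[3] (3 * ((4:ℕ) : ℤ), exType 4) = (3, (↑([2,1,1,1,1,0,0,0,0] : List ℤ) : Multiset ℤ)) := by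
    rw [show (3:ℕ) = 2+1 from rfl, Function.iterate_succ_apply', e2,
      step_list 5 3 2 2 [2,1,1,1,0,0] _ rfl (by decide)]
    decide
  have e4 : hudsonStep^[4] (3 * ((4:ℕ) : ℤ), exType 4) = (2, (↑([1,1,1,0,0,0,0,0,0] : List ℤ) : Multiset ℤ)) := by
    rw [show (4:ℕ) = 3+1 from rfl, Function.iterate_succ_apply', e3,
      step_list 3 2 1 1 [1,1,0,0,0,0] _ rfl (by decide)]
    decide
  have e5 : hudsonStep^[5] (3 * ((4:ℕ) : ℤ), exType 4) = (1, (↑([0,0,0,0,0,0,0,0,0] : List ℤ) : Multiset ℤ)) := by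
    rw [show (5:ℕ) = 4+1 from rfl, Function.iterate_succ_apply', e4,
      step_list 2 1 1 1 [0,0,0,0,0,0] _ rfl (by decide)]
    decide
  refine ⟨5, ?_, by rw [e5], by rw [e5]; decide⟩
  intro j hj x hx
  interval_cases j
  · rw [Function.iterate_zero_apply] at hx
    rw [show (3 * ((4:ℕ):ℤ), exType 4).2 = exType 4 from rfl, e0] at hx
    revert hx; revert x; decide
  · rw [e1] at hx; revert hx; revert x; decide
  · rw [e2] at hx; revert hx; revert x; decide
  · rw [e3] at hx; revert hx; revert x; decide
  · rw [e4] at hx; revert hx; revert x; decide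
  · rw [e5] at hx; revert hx; revert x; decide


/-- For `m ≥ 5`, one Hudson step applied to `(3m; 3m-6, 6^{m-3}, 4³, 3², 2, 1)`
(sorted decreasingly, `ε = 6`) yields the multiplicities of
`(3(m-2); 3(m-2)-6, 6^{m-5}, 4³, 3², 2, 1)` (together with two zero entries);
consequently, by induction from the base cases `m = 3, 4`, the type
`(3m; 3m-6, 6^{m-3}, 4³, 3², 2, 1)` passes Hudson's test for every `m ≥ 3`. -/
theorem exType_passes_hudson :
    (∀ m : ℕ, 5 ≤ m →
      hudsonStep (3 * (m : ℤ), exType m) =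
        (3 * ((m : ℤ) - 2), exType (m - 2) + Multiset.replicate 2 0)) ∧
    (∀ m : ℕ, 3 ≤ m → passesHudson (3 * (m : ℤ), exType m)) := by
  constructor
  · exact part1
  · intro m
    induction m using Nat.strong_induction_on with
    | _ m ih =>
      intro hm
      by_cases h5 : m ≤ 4
      · interval_cases m
        · exact base3
        · exact base4
      · push_neg at h5
        have hm5 : 5 ≤ m := h5
        have IH : passesHudson (3 * ((m - 2 : ℕ) : ℤ), exType (m - 2)) :=
          ih (m - 2) (by omega) (by omega)
        have hcd : 3 ≤ Multiset.card (exType (m - 2)) := by simp [exType]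
        have pz := passes_add_zeros _ _ 2 hcd IH
        apply passes_of_step
        · intro x hx
          rw [show (3 * (m:ℤ), exType m).2 = exType m from rfl, exType_coe m hm5] at hx
          have hm' : (5:ℤ) ≤ (m:ℤ) := by exact_mod_cast hm5
          simp only [Multiset.mem_coe, List.mem_cons, List.mem_append] at hx
          rcases hx with h|h|h|h|h
          · omega
          · omega
          · omega
          · have := List.eq_of_mem_replicate h; omega
          · simp only [List.mem_cons, List.not_mem_nil, or_false] at h
            rcases h with h|h|h|h|h|h|h <;> omega
        · rw [part1 m hm5]
          have hc : (3 * ((m:ℤ) - 2)) = 3 * ((m - 2 : ℕ) : ℤ) := by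
            push_cast [Nat.cast_sub (show 2 ≤ m by omega)]; ring
          rw [hc]
          exact pz
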